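/- Let q be a prime power with q > 2, and let S ⊆ F_q^2 be a set such that for all ρ ∈ F_q there exists a ∈ F_q^2 with {a + ρ·(λ, λ²) : λ ∈ F_q} ⊆ S. Let k ∈ N be a multiple of q, let D = k(q-1) - 1 and M = 3k - 4k/q. Then binom(M+1, 2) · |S| ≥ binom(D+2, 2). -/

import Mathlib

open Finset
open scoped Classical

/-- The translated parabola `{(a₁ + ρλ, a₂ + ρλ²) : λ ∈ F}` as a finset. -/
noncomputable def brkParab {F : Type*} [Field F] [Fintype F] (ρ : F) (a : F × F) :
    Finset (F × F) :=
  Finset.univ.image (fun l : F => (a.1 + ρ * l, a.2 + ρ * l ^ 2))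

theorem brk_quad_roots {F : Type*} [Field F] [Fintype F] (α β γ : F) (hα : α ≠ 0) :
    (Finset.univ.filter (fun x : F => α*x^2 + β*x + γ = 0)).card ≤ 2 := by
  by_contra h
  push_neg at h
  obtain ⟨a, b, c, ha, hb, hc, hab, hac, hbc⟩ := Finset.two_lt_card_iff.mp h
  simp only [mem_filter] at ha hb hc
  have key : ∀ x y : F, α*x^2 + β*x + γ = 0 → α*y^2 + β*y + γ = 0 → x ≠ y →
      α*(x+y) + β = 0 := by
    intro x y hx hy hxy
    have h1 : (x - y) * (α*(x+y) + β) = 0 := by ring_nf; linear_combination hx - hy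
    rcases mul_eq_zero.mp h1 with h2 | h2
    · exact absurd (sub_eq_zero.mp h2) hxy
    · exact h2
  have h1 := key a b ha.2 hb.2 hab
  have h2 := key a c ha.2 hc.2 hac
  have : α * (b - c) = 0 := by linear_combination h1 - h2
  rcases mul_eq_zero.mp this with h3 | h3
  · exact hα h3
  · exact hbc (sub_eq_zero.mp h3)

theorem brk_parab_card {F : Type*} [Field F] [Fintype F] (ρ : F) (hρ : ρ ≠ 0) (a : F × F) :
    (brkParab ρ a).card = Fintype.card F := by
  rw [brkParab, Finset.card_image_of_injective _ (fun x y hxy => ?_), Finset.card_univ]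
  have := congrArg Prod.fst hxy
  simp only at this
  exact mul_left_cancel₀ hρ (by linear_combination this)

theorem brk_parab_inter {F : Type*} [Field F] [Fintype F] (ρ ρ' : F) (hρ : ρ ≠ 0)
    (hρ' : ρ' ≠ 0) (hne : ρ ≠ ρ') (a a' : F × F) :
    (brkParab ρ a ∩ brkParab ρ' a').card ≤ 2 := by
  set α := ρ' - ρ with hα
  set β := 2*(ρ*a'.1 - ρ'*a.1) with hβ
  set γ := ρ'*a.1^2 - ρ*a'.1^2 + (a.2 - a'.2)*ρ*ρ' with hγ
  have hα0 : α ≠ 0 := sub_ne_zero.mpr (Ne.symm hne)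
  refine le_trans (Finset.card_le_card_of_injOn Prod.fst ?_ ?_) (brk_quad_roots α β γ hα0)
  · rintro ⟨x, y⟩ hp
    simp only [brkParab, Finset.mem_coe, Finset.mem_inter, Finset.mem_image, Finset.mem_univ, true_and] at hp
    obtain ⟨⟨l, hl⟩, ⟨m, hm⟩⟩ := hp
    have e1 : a.1 + ρ * l = x := congrArg Prod.fst hl
    have e2 : a.2 + ρ * l ^ 2 = y := congrArg Prod.snd hl
    have f1 : a'.1 + ρ' * m = x := congrArg Prod.fst hm
    have f2 : a'.2 + ρ' * m ^ 2 = y := congrArg Prod.snd hm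
    subst e1
    have g : a.2 + ρ * l ^ 2 = a'.2 + ρ' * m ^ 2 := by rw [e2, ← f2]
    have h : a.1 + ρ * l = a'.1 + ρ' * m := by rw [f1]
    simp only [Finset.mem_coe, Finset.mem_filter, Finset.mem_univ, true_and]
    linear_combination (ρ*ρ')*g - (ρ*(2*ρ'*m + (a.1 + ρ*l - a'.1 - ρ'*m)))*h
  · rintro ⟨x, y⟩ hp ⟨x', y'⟩ hp' (h : x = x')
    simp only [brkParab, Finset.mem_coe, Finset.mem_inter, Finset.mem_image, Finset.mem_univ,
      true_and] at hp hp'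
    obtain ⟨⟨l, hl⟩, -⟩ := hp
    obtain ⟨⟨l', hl'⟩, -⟩ := hp'
    subst h
    have h1 : a.1 + ρ * l = a.1 + ρ * l' := by
      rw [Prod.ext_iff] at hl hl'; simp at hl hl'; rw [hl.1, hl'.1]
    have : l = l' := mul_left_cancel₀ hρ (by linear_combination h1)
    subst this
    rw [← hl, ← hl']

theorem brk_parab_union {F : Type*} [Field F] [Fintype F] (q : ℕ) (hq : Fintype.card F = q)
    (a : F → F × F) (T : Finset F) (hT : (0 : F) ∉ T) :
    T.card * (q + 1) ≤ (T.biUnion (fun ρ => brkParab ρ (a ρ))).card + T.card * T.card := by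
  revert hT
  induction T using Finset.induction_on with
  | empty => intro _; simp
  | @insert ρ T hx ih =>
    intro hT
    have hρ0 : ρ ≠ 0 := fun h => hT (h ▸ Finset.mem_insert_self ρ T)
    have hT0 : (0 : F) ∉ T := fun h => hT (Finset.mem_insert_of_mem h)
    have IH := ih hT0
    rw [Finset.biUnion_insert, Finset.card_insert_of_notMem hx]
    set U := T.biUnion (fun ρ => brkParab ρ (a ρ)) with hU
    set P := brkParab ρ (a ρ) with hP
    have hcup : (P ∪ U).card + (P ∩ U).card = P.card + U.card :=
      Finset.card_union_add_card_inter P U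
    have hPcard : P.card = q := by rw [hP, brk_parab_card ρ hρ0, hq]
    have hint : (P ∩ U).card ≤ 2 * T.card := by
      have hsub : P ∩ U ⊆ T.biUnion (fun t => P ∩ brkParab t (a t)) := by
        intro p hp
        rw [Finset.mem_inter, hU, Finset.mem_biUnion] at hp
        obtain ⟨hp1, t, ht, hpt⟩ := hp
        rw [Finset.mem_biUnion]
        exact ⟨t, ht, Finset.mem_inter.mpr ⟨hp1, hpt⟩⟩
      calc (P ∩ U).card ≤ ∑ t ∈ T, (P ∩ brkParab t (a t)).card :=
            le_trans (Finset.card_le_card hsub) (Finset.card_biUnion_le)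
        _ ≤ ∑ _t ∈ T, 2 := by
            refine Finset.sum_le_sum (fun t ht => ?_)
            have ht0 : t ≠ 0 := fun h => hT0 (h ▸ ht)
            have htρ : ρ ≠ t := fun h => hx (h ▸ ht)
            exact brk_parab_inter ρ t hρ0 ht0 htρ (a ρ) (a t)
        _ = 2 * T.card := by rw [Finset.sum_const, smul_eq_mul, mul_comm]
    have hub : U.card ≤ (P ∪ U).card := Finset.card_le_card Finset.subset_union_right
    nlinarith [hcup, hint, IH, hPcard]

theorem brk_warmup_dim_two {F : Type*} [Field F] [Fintype F] (q : ℕ)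
    (hq : Fintype.card F = q) (hq2 : 2 < q)
    (S : Finset (F × F))
    (hS : ∀ ρ : F, ∃ a : F × F, ∀ lam : F, (a.1 + ρ * lam, a.2 + ρ * lam ^ 2) ∈ S)
    (k : ℕ) (hk : 0 < k) (hkq : q ∣ k)
    (D M : ℕ) (hD : D = k * (q - 1) - 1) (hM : M = 3 * k - 4 * k / q) :
    Nat.choose (D + 2) 2 ≤ Nat.choose (M + 1) 2 * S.card := by
  classical
  choose a ha using hS
  obtain ⟨m, hkm⟩ := hkq
  have hm1 : 1 ≤ m := by
    rcases Nat.eq_zero_or_pos m with h | h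
    · subst h; simp at hkm; omega
    · exact h
  -- choose n = ⌈q/2⌉ many nonzero ρ's
  set n := (q + 1) / 2 with hn
  have hnq : n ≤ (Finset.univ.erase (0:F)).card := by
    rw [Finset.card_erase_of_mem (Finset.mem_univ _), Finset.card_univ, hq]
    omega
  obtain ⟨T, hTsub, hTcard⟩ := Finset.exists_subset_card_eq hnq
  have hT0 : (0 : F) ∉ T := fun h => (Finset.mem_erase.mp (hTsub h)).1 rfl
  have hUS : T.biUnion (fun ρ => brkParab ρ (a ρ)) ⊆ S := by
    refine Finset.biUnion_subset.mpr (fun ρ _ => ?_)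
    intro p hp
    simp only [brkParab, Finset.mem_image, Finset.mem_univ, true_and] at hp
    obtain ⟨l, hl⟩ := hp
    rw [← hl]; exact ha ρ l
  have hs : n * (q + 1) ≤ S.card + n * n := by
    have := brk_parab_union q hq a T hT0
    rw [hTcard] at this
    have hcard := Finset.card_le_card hUS
    omega
  set s := S.card with hscard
  -- 4s ≥ q(q+1)
  have h4s : q * (q + 1) ≤ 4 * s := by
    have hcase : 2 * n = q ∨ 2 * n = q + 1 := by omega
    rcases hcase with h | h <;> nlinarith [hs]
  -- set up the arithmetic
  obtain ⟨r, hr⟩ : ∃ r, q = r + 3 := ⟨q - 3, by omega⟩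
  have hq1 : q - 1 = r + 2 := by omega
  obtain ⟨C1, hC1⟩ : ∃ C1, (r+3)*(r+2) = C1 := ⟨_, rfl⟩
  obtain ⟨A, hA⟩ : ∃ A, m * C1 = A := ⟨_, rfl⟩
  obtain ⟨B, hB⟩ : ∃ B, m * (3*r+5) = B := ⟨_, rfl⟩
  have hkA : k * (q - 1) = A := by rw [hq1, hkm, hr, ← hA, ← hC1]; ring
  have hA1 : 0 < A := by
    rw [← hA, ← hC1]; exact Nat.mul_pos hm1 (by positivity)
  have hDval : D + 2 = A + 1 := by rw [hD, hkA]; omega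
  have hdiv : 4 * k / q = 4 * m := by
    rw [hkm, show 4*(q*m) = q*(4*m) by ring]
    exact Nat.mul_div_cancel_left _ (by omega)
  have hMval : M + 1 = B + 1 := by
    have h3k : 3 * k = B + 4 * m := by rw [hkm, hr, ← hB]; ring
    rw [hM, hdiv, h3k]; omega
  rw [hDval, hMval, Nat.choose_two_right, Nat.choose_two_right]
  simp only [Nat.add_sub_cancel]
  -- key polynomial inequality
  have hpoly : 4*((C1+1)*C1) ≤ (3*r+5)*((3*r+5)*((r+3)*(r+4))) := by
    rw [← hC1]
    have hid : (3*r+5)*((3*r+5)*((r+3)*(r+4)))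
        = 4*(((r+3)*(r+2)+1)*((r+3)*(r+2))) + (r+3)*(5*r^3+38*r^2+77*r+44) := by ring
    rw [hid]
    exact Nat.le_add_right _ _
  have hqq : q * (q + 1) = (r+3)*(r+4) := by rw [hr]
  have st1 : (C1+1)*C1 ≤ (3*r+5)*((3*r+5)*s) := by
    have h2 : (3*r+5)*((3*r+5)*((r+3)*(r+4))) ≤ (3*r+5)*((3*r+5)*(4*s)) := by
      have := hqq ▸ h4s
      exact Nat.mul_le_mul_left _ (Nat.mul_le_mul_left _ this)
    have h3 : 4*((C1+1)*C1) ≤ 4*((3*r+5)*((3*r+5)*s)) := by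
      calc 4*((C1+1)*C1) ≤ (3*r+5)*((3*r+5)*((r+3)*(r+4))) := hpoly
        _ ≤ (3*r+5)*((3*r+5)*(4*s)) := h2
        _ = 4*((3*r+5)*((3*r+5)*s)) := by ring
    omega
  have key : (A+1)*A ≤ (B+1)*B*s := by
    calc (A+1)*A ≤ (m*(C1+1))*(m*C1) := by
          refine Nat.mul_le_mul ?_ (le_of_eq hA.symm)
          have : m*(C1+1) = A + m := by rw [← hA]; ring
          omega
      _ = m*m*((C1+1)*C1) := by ring
      _ ≤ m*m*((3*r+5)*((3*r+5)*s)) := Nat.mul_le_mul_left _ st1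
      _ = B*B*s := by rw [← hB]; ring
      _ ≤ (B+1)*B*s := Nat.mul_le_mul_right _ (Nat.mul_le_mul_right _ (Nat.le_succ B))
  have h2dvd : 2 ∣ (B+1)*B := by
    rw [mul_comm]; exact (Nat.even_mul_succ_self B).two_dvd
  calc (A+1)*A/2 ≤ (B+1)*B*s/2 := Nat.div_le_div_right key
    _ = (B+1)*B/2*s := by
      obtain ⟨t, ht⟩ := h2dvd
      rw [ht, mul_assoc, Nat.mul_div_cancel_left _ two_pos, Nat.mul_div_cancel_left _ two_pos]
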